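/- Fix N ≥ 1. On an open set U ⊆ ℝ^N × ℝ^N × ℝ^N with coordinates (x,u,v), let e_{iα} : U → ℝ be smooth functions depending only on (u,v) (∂e_{iα}/∂x_j = 0), and define for smooth F,G : U → ℝ the brackets B₁(F,G) = Σᵢ (∂F/∂xᵢ · ∂G/∂uᵢ − ∂G/∂xᵢ · ∂F/∂uᵢ) and B₂(F,G) = Σ_{i,α} (∂F/∂xᵢ · e_{iα} · ∂G/∂v_α − ∂G/∂xᵢ · e_{iα} · ∂F/∂v_α). Then every linear combination αB₁ + βB₂ (α, β ∈ ℝ) satisfies the Jacobi identity on U if and only if e satisfies on U: (E1) ∂e_{jα}/∂uᵢ = ∂e_{iα}/∂u_j for all i, j, α, and (E2) Σ_α (e_{iα} · ∂e_{jβ}/∂v_α − e_{jα} · ∂e_{iβ}/∂v_α) = 0 for all i, j, β. -/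

import Mathlib

/-- The triplectic model space `ℝ^N × ℝ^N × ℝ^N` with coordinates `(x, u, v)`. -/
abbrev Tri (N : ℕ) := (Fin N → ℝ) × (Fin N → ℝ) × (Fin N → ℝ)

/-- Partial derivative `∂f/∂xᵢ`. -/
noncomputable def dX {N : ℕ} (i : Fin N) (f : Tri N → ℝ) (p : Tri N) : ℝ :=
  fderiv ℝ f p ((fun l => if l = i then 1 else 0), 0, 0)

/-- Partial derivative `∂f/∂uᵢ`. -/
noncomputable def dU {N : ℕ} (i : Fin N) (f : Tri N → ℝ) (p : Tri N) : ℝ :=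
  fderiv ℝ f p (0, (fun l => if l = i then 1 else 0), 0)

/-- Partial derivative `∂f/∂vᵢ`. -/
noncomputable def dV {N : ℕ} (i : Fin N) (f : Tri N → ℝ) (p : Tri N) : ℝ :=
  fderiv ℝ f p (0, 0, (fun l => if l = i then 1 else 0))

/-- The canonical bracket `B₁(F,G) = Σᵢ (∂F/∂xᵢ ∂G/∂uᵢ − ∂G/∂xᵢ ∂F/∂uᵢ)`. -/
noncomputable def bracket1 {N : ℕ} (F G : Tri N → ℝ) (p : Tri N) : ℝ :=
  ∑ i, (dX i F p * dU i G p - dX i G p * dU i F p)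

/-- The weakly canonical bracket
`B₂(F,G) = Σ_{i,α} (∂F/∂xᵢ e_{iα} ∂G/∂v_α − ∂G/∂xᵢ e_{iα} ∂F/∂v_α)`. -/
noncomputable def bracket2 {N : ℕ} (e : Fin N → Fin N → Tri N → ℝ)
    (F G : Tri N → ℝ) (p : Tri N) : ℝ :=
  ∑ i, ∑ α, (dX i F p * e i α p * dV α G p - dX i G p * e i α p * dV α F p)

/-- The linear combination `a•B₁ + b•B₂` of the two brackets. -/
noncomputable def bracketComb {N : ℕ} (e : Fin N → Fin N → Tri N → ℝ) (a b : ℝ)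
    (F G : Tri N → ℝ) : Tri N → ℝ :=
  fun p => a * bracket1 F G p + b * bracket2 e F G p




noncomputable def dW {N : ℕ} (w : Tri N) (f : Tri N → ℝ) (q : Tri N) : ℝ := fderiv ℝ f q w

def bX {N : ℕ} (i : Fin N) : Tri N := ((fun l => if l = i then 1 else 0), 0, 0)
def bU {N : ℕ} (i : Fin N) : Tri N := (0, (fun l => if l = i then 1 else 0), 0)
def bV {N : ℕ} (i : Fin N) : Tri N := (0, 0, (fun l => if l = i then 1 else 0))

variable {N : ℕ}

lemma dX_eq (i : Fin N) (f : Tri N → ℝ) : dX i f = dW (bX i) f := rfl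
lemma dU_eq (i : Fin N) (f : Tri N → ℝ) : dU i f = dW (bU i) f := rfl
lemma dV_eq (i : Fin N) (f : Tri N → ℝ) : dV i f = dW (bV i) f := rfl

lemma top_le : ((⊤:ℕ∞) : WithTop ℕ∞) + 1 ≤ ((⊤:ℕ∞) : WithTop ℕ∞) := by
  exact_mod_cast le_top

lemma contDiff_dW {f : Tri N → ℝ} (hf : ContDiff ℝ (⊤:ℕ∞) f) (w : Tri N) :
    ContDiff ℝ (⊤:ℕ∞) (dW w f) :=
  (hf.fderiv_right (m := ((⊤:ℕ∞) : WithTop ℕ∞)) top_le).clm_apply contDiff_const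

lemma diffAt_dW {f : Tri N → ℝ} (hf : ContDiff ℝ (⊤:ℕ∞) f) (w p : Tri N) :
    DifferentiableAt ℝ (dW w f) p :=
  (contDiff_dW hf w).differentiable (by simp) p

lemma dW_comm {f : Tri N → ℝ} (hf : ContDiff ℝ (⊤:ℕ∞) f) (p v w : Tri N) :
    dW w (dW v f) p = dW v (dW w f) p := by
  have hdf : Differentiable ℝ f := hf.differentiable (by simp)
  have h1 : ContDiff ℝ (⊤:ℕ∞) (fderiv ℝ f) := hf.fderiv_right top_le
  have h2 : HasFDerivAt (fderiv ℝ f) (fderiv ℝ (fderiv ℝ f) p) p :=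
    (h1.differentiable (by simp) p).hasFDerivAt
  have hval : ∀ u z : Tri N, fderiv ℝ (dW u f) p z = (fderiv ℝ (fderiv ℝ f) p z) u := by
    intro u z
    have heq : dW u f = fun q => (fderiv ℝ f q) u := rfl
    have h3 := (h2.clm_apply (hasFDerivAt_const u p)).fderiv
    rw [heq, h3]; simp
  show fderiv ℝ (dW v f) p w = fderiv ℝ (dW w f) p v
  rw [hval v w, hval w v]
  exact second_derivative_symmetric (fun y => (hdf y).hasFDerivAt) h2 w v

lemma dW_mul {φ ψ : Tri N → ℝ} {p : Tri N} (hφ : DifferentiableAt ℝ φ p)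
    (hψ : DifferentiableAt ℝ ψ p) (w : Tri N) :
    dW w (fun q => φ q * ψ q) p = dW w φ p * ψ p + φ p * dW w ψ p := by
  show fderiv ℝ (fun q => φ q * ψ q) p w = _
  rw [fderiv_fun_mul hφ hψ]; simp [dW]; ring

lemma dW_sum {ι : Type*} {s : Finset ι} {φ : ι → Tri N → ℝ} {p : Tri N}
    (hφ : ∀ i ∈ s, DifferentiableAt ℝ (φ i) p) (w : Tri N) :
    dW w (fun q => ∑ i ∈ s, φ i q) p = ∑ i ∈ s, dW w (φ i) p := by
  show fderiv ℝ (fun q => ∑ i ∈ s, φ i q) p w = _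
  rw [fderiv_fun_sum hφ]; simp [dW]

lemma dW_sub {φ ψ : Tri N → ℝ} {p : Tri N} (hφ : DifferentiableAt ℝ φ p)
    (hψ : DifferentiableAt ℝ ψ p) (w : Tri N) :
    dW w (fun q => φ q - ψ q) p = dW w φ p - dW w ψ p := by
  show fderiv ℝ (fun q => φ q - ψ q) p w = _
  rw [fderiv_fun_sub hφ hψ]; simp [dW]

lemma dW_add {φ ψ : Tri N → ℝ} {p : Tri N} (hφ : DifferentiableAt ℝ φ p)
    (hψ : DifferentiableAt ℝ ψ p) (w : Tri N) :
    dW w (fun q => φ q + ψ q) p = dW w φ p + dW w ψ p := by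
  show fderiv ℝ (fun q => φ q + ψ q) p w = _
  rw [fderiv_fun_add hφ hψ]; simp [dW]

lemma dW_const_mul {φ : Tri N → ℝ} {p : Tri N} (hφ : DifferentiableAt ℝ φ p) (c : ℝ) (w : Tri N) :
    dW w (fun q => c * φ q) p = c * dW w φ p := by
  show fderiv ℝ (fun q => c * φ q) p w = _
  rw [fderiv_const_mul hφ c]; simp [dW]

lemma dW_coordX (j : Fin N) (w p : Tri N) : dW w (fun q : Tri N => q.1 j) p = w.1 j := by
  have h : (fun q : Tri N => q.1 j)
      = ((ContinuousLinearMap.proj j).comp (ContinuousLinearMap.fst ℝ (Fin N → ℝ) ((Fin N → ℝ) × (Fin N → ℝ))) : Tri N →L[ℝ] ℝ) := rfl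
  rw [dW, h, ContinuousLinearMap.fderiv]; rfl

lemma dW_coordV (j : Fin N) (w p : Tri N) : dW w (fun q : Tri N => q.2.2 j) p = w.2.2 j := by
  have h : (fun q : Tri N => q.2.2 j)
      = (((ContinuousLinearMap.proj j).comp (ContinuousLinearMap.snd ℝ (Fin N → ℝ) (Fin N → ℝ))).comp
          (ContinuousLinearMap.snd ℝ (Fin N → ℝ) ((Fin N → ℝ) × (Fin N → ℝ))) : Tri N →L[ℝ] ℝ) := rfl
  rw [dW, h, ContinuousLinearMap.fderiv]; rfl

lemma dW_zero (w p : Tri N) : dW w (fun _ => (0:ℝ)) p = 0 := by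
  show fderiv ℝ (fun _ : Tri N => (0:ℝ)) p w = 0
  rw [fderiv_fun_const]; rfl

/-- The combined derivation `D_i = a ∂_{u_i} + b Σ_α e_{iα} ∂_{v_α}`. -/
noncomputable def Dd {N : ℕ} (e : Fin N → Fin N → Tri N → ℝ) (a b : ℝ) (i : Fin N)
    (f : Tri N → ℝ) (q : Tri N) : ℝ :=
  a * dU i f q + b * ∑ α, e i α q * dV α f q


section Aux
variable {e : Fin N → Fin N → Tri N → ℝ} {a b : ℝ} {U : Set (Tri N)}

lemma bracketComb_eq (e : Fin N → Fin N → Tri N → ℝ) (a b : ℝ) (F G : Tri N → ℝ) :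
    bracketComb e a b F G
      = fun q => ∑ i, (dX i F q * Dd e a b i G q - dX i G q * Dd e a b i F q) := by
  funext q
  simp only [bracketComb, bracket1, bracket2, Dd, Finset.mul_sum]
  rw [← Finset.sum_add_distrib]
  refine Finset.sum_congr rfl fun i _ => ?_
  simp only [Finset.mul_sum, Finset.sum_sub_distrib, mul_sub, mul_add]
  ring_nf

variable {p : Tri N}

lemma diffAt_Dd (hediff : ∀ i α, DifferentiableAt ℝ (e i α) p)
    {f : Tri N → ℝ} (hf : ContDiff ℝ (⊤:ℕ∞) f) (i : Fin N) :
    DifferentiableAt ℝ (Dd e a b i f) p := by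
  show DifferentiableAt ℝ (fun q => a * dU i f q + b * ∑ α, e i α q * dV α f q) p
  apply DifferentiableAt.add
  · exact (diffAt_dW hf (bU i) p).const_mul a
  · refine DifferentiableAt.const_mul ?_ b
    exact DifferentiableAt.fun_sum fun α _ => (hediff i α).mul (diffAt_dW hf (bV α) p)

lemma Dd_mul (hediff : ∀ i α, DifferentiableAt ℝ (e i α) p)
    {φ ψ : Tri N → ℝ} (hφ : DifferentiableAt ℝ φ p) (hψ : DifferentiableAt ℝ ψ p) (k : Fin N) :
    Dd e a b k (fun q => φ q * ψ q) p
      = Dd e a b k φ p * ψ p + φ p * Dd e a b k ψ p := by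
  simp only [Dd, dU_eq, dV_eq, dW_mul hφ hψ]
  simp only [mul_add, add_mul, Finset.mul_sum, Finset.sum_add_distrib, Finset.sum_mul]
  ring_nf

lemma Dd_sum {ι : Type*} {s : Finset ι} {φ : ι → Tri N → ℝ}
    (hφ : ∀ i ∈ s, DifferentiableAt ℝ (φ i) p) (k : Fin N) :
    Dd e a b k (fun q => ∑ i ∈ s, φ i q) p = ∑ i ∈ s, Dd e a b k (φ i) p := by
  simp only [Dd, dU_eq, dV_eq, dW_sum hφ, Finset.mul_sum]
  rw [Finset.sum_comm]
  rw [← Finset.sum_add_distrib]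

lemma Dd_sub {φ ψ : Tri N → ℝ} (hφ : DifferentiableAt ℝ φ p) (hψ : DifferentiableAt ℝ ψ p)
    (k : Fin N) :
    Dd e a b k (fun q => φ q - ψ q) p = Dd e a b k φ p - Dd e a b k ψ p := by
  simp only [Dd, dU_eq, dV_eq, dW_sub hφ hψ]
  simp only [mul_sub, Finset.sum_sub_distrib]
  ring

lemma dW_Dd (hediff : ∀ i α, DifferentiableAt ℝ (e i α) p)
    {f : Tri N → ℝ} (hf : ContDiff ℝ (⊤:ℕ∞) f) (i : Fin N) (w : Tri N) :
    dW w (Dd e a b i f) p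
      = a * dW w (dU i f) p
        + b * ∑ α, (dW w (e i α) p * dV α f p + e i α p * dW w (dV α f) p) := by
  have h0 : Dd e a b i f = fun q => (fun q' => a * dU i f q') q + (fun q' => b * ∑ α, e i α q' * dV α f q') q := rfl
  rw [h0]
  rw [dW_add (by exact (diffAt_dW hf (bU i) p).const_mul a)
      (by exact DifferentiableAt.const_mul (DifferentiableAt.fun_sum fun α _ => (hediff i α).mul (diffAt_dW hf (bV α) p)) b) w]
  rw [dW_const_mul (by exact diffAt_dW hf (bU i) p) a w]
  rw [dW_const_mul (by exact DifferentiableAt.fun_sum fun α _ => (hediff i α).mul (diffAt_dW hf (bV α) p)) b w]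
  rw [dW_sum (fun α _ => by exact (hediff i α).mul (diffAt_dW hf (bV α) p)) w]
  congr 1
  congr 1
  refine Finset.sum_congr rfl fun α _ => ?_
  rw [dW_mul (hediff i α) (by exact diffAt_dW hf (bV α) p) w]

lemma Dd_dX_comm (hediff : ∀ i α, DifferentiableAt ℝ (e i α) p)
    (hexp : ∀ i α j, dX j (e i α) p = 0)
    {f : Tri N → ℝ} (hf : ContDiff ℝ (⊤:ℕ∞) f) (k i : Fin N) :
    Dd e a b k (dX i f) p = dX i (Dd e a b k f) p := by
  have hrhs : dX i (Dd e a b k f) p = dW (bX i) (Dd e a b k f) p := rfl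
  rw [hrhs, dW_Dd hediff hf k (bX i)]
  have hlhs : Dd e a b k (dX i f) p
      = a * dU k (dX i f) p + b * ∑ α, e k α p * dV α (dX i f) p := rfl
  rw [hlhs]
  have h1 : dW (bX i) (dU k f) p = dU k (dX i f) p := by
    show dW (bX i) (dW (bU k) f) p = dW (bU k) (dW (bX i) f) p
    exact dW_comm hf p (bU k) (bX i)
  have h2 : ∀ α : Fin N, dW (bX i) (dV α f) p = dV α (dX i f) p := fun α => by
    show dW (bX i) (dW (bV α) f) p = dW (bV α) (dW (bX i) f) p
    exact dW_comm hf p (bV α) (bX i)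
  have h3 : ∀ α : Fin N, dW (bX i) (e k α) p = 0 := fun α => hexp k α i
  simp only [h1, h2, h3, zero_mul, zero_add]

lemma Dd_expand (hediff : ∀ i α, DifferentiableAt ℝ (e i α) p)
    {f : Tri N → ℝ} (hf : ContDiff ℝ (⊤:ℕ∞) f) (k i : Fin N) :
    Dd e a b k (Dd e a b i f) p
      = a*a * dW (bU k) (dW (bU i) f) p
      + a*b * (∑ α, dW (bU k) (e i α) p * dW (bV α) f p)
      + a*b * (∑ α, e i α p * dW (bU k) (dW (bV α) f) p)
      + a*b * (∑ β, e k β p * dW (bV β) (dW (bU i) f) p)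
      + b*b * (∑ α, (∑ β, e k β p * dW (bV β) (e i α) p) * dW (bV α) f p)
      + b*b * (∑ α, ∑ β, e k β p * e i α p * dW (bV β) (dW (bV α) f) p) := by
  have h1 : Dd e a b k (Dd e a b i f) p
      = a * dW (bU k) (Dd e a b i f) p + b * ∑ β, e k β p * dW (bV β) (Dd e a b i f) p := rfl
  rw [h1, dW_Dd hediff hf i (bU k)]
  have h2 : ∀ β : Fin N, e k β p * dW (bV β) (Dd e a b i f) p
      = e k β p * (a * dW (bV β) (dU i f) p
        + b * ∑ α, (dW (bV β) (e i α) p * dV α f p + e i α p * dW (bV β) (dV α f) p)) :=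
    fun β => by rw [dW_Dd hediff hf i (bV β)]
  simp only [h2, dU_eq, dV_eq]
  simp only [mul_add, add_mul, Finset.mul_sum, Finset.sum_add_distrib, Finset.sum_mul]
  have s1 : ∑ α : Fin N, a * (b * (dW (bU k) (e i α) p * dW (bV α) f p))
      = ∑ α : Fin N, a*b*(dW (bU k) (e i α) p * dW (bV α) f p) :=
    Finset.sum_congr rfl fun α _ => by ring
  have s2 : ∑ α : Fin N, a * (b * (e i α p * dW (bU k) (dW (bV α) f) p))
      = ∑ α : Fin N, a*b*(e i α p * dW (bU k) (dW (bV α) f) p) :=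
    Finset.sum_congr rfl fun α _ => by ring
  have s3 : ∑ β : Fin N, b * (e k β p * (a * dW (bV β) (dW (bU i) f) p))
      = ∑ β : Fin N, a*b*(e k β p * dW (bV β) (dW (bU i) f) p) :=
    Finset.sum_congr rfl fun β _ => by ring
  have s4 : ∑ β : Fin N, ∑ α : Fin N, b * (e k β p * (b * (dW (bV β) (e i α) p * dW (bV α) f p)))
      = ∑ α : Fin N, ∑ β : Fin N, b*b*(e k β p * dW (bV β) (e i α) p * dW (bV α) f p) := by
    rw [Finset.sum_comm]
    exact Finset.sum_congr rfl fun α _ => Finset.sum_congr rfl fun β _ => by ring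
  have s5 : ∑ β : Fin N, ∑ α : Fin N, b * (e k β p * (b * (e i α p * dW (bV β) (dW (bV α) f) p)))
      = ∑ α : Fin N, ∑ β : Fin N, b*b*(e k β p * e i α p * dW (bV β) (dW (bV α) f) p) := by
    rw [Finset.sum_comm]
    exact Finset.sum_congr rfl fun α _ => Finset.sum_congr rfl fun β _ => by ring
  rw [s1, s2, s3, s4, s5]
  ring

lemma Dd_Dd_comm (hediff : ∀ i α, DifferentiableAt ℝ (e i α) p)
    (hE1 : ∀ i j α, dU i (e j α) p = dU j (e i α) p)
    (hE2 : ∀ i j β, ∑ α, (e i α p * dV α (e j β) p - e j α p * dV α (e i β) p) = 0)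
    {f : Tri N → ℝ} (hf : ContDiff ℝ (⊤:ℕ∞) f) (k i : Fin N) :
    Dd e a b k (Dd e a b i f) p = Dd e a b i (Dd e a b k f) p := by
  rw [Dd_expand hediff hf k i, Dd_expand hediff hf i k]
  have h1 : dW (bU k) (dW (bU i) f) p = dW (bU i) (dW (bU k) f) p := dW_comm hf p (bU i) (bU k)
  have h2 : ∑ α : Fin N, dW (bU k) (e i α) p * dW (bV α) f p
      = ∑ α : Fin N, dW (bU i) (e k α) p * dW (bV α) f p :=
    Finset.sum_congr rfl fun α _ => by rw [show dW (bU k) (e i α) p = dW (bU i) (e k α) p from hE1 k i α]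
  have h34 : ∑ α : Fin N, e i α p * dW (bU k) (dW (bV α) f) p
      = ∑ β : Fin N, e i β p * dW (bV β) (dW (bU k) f) p :=
    Finset.sum_congr rfl fun α _ => by rw [dW_comm hf p (bV α) (bU k)]
  have h43 : ∑ β : Fin N, e k β p * dW (bV β) (dW (bU i) f) p
      = ∑ α : Fin N, e k α p * dW (bU i) (dW (bV α) f) p :=
    Finset.sum_congr rfl fun α _ => by rw [dW_comm hf p (bV α) (bU i)]
  have h5 : ∑ α : Fin N, (∑ β : Fin N, e k β p * dW (bV β) (e i α) p) * dW (bV α) f p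
      = ∑ α : Fin N, (∑ β : Fin N, e i β p * dW (bV β) (e k α) p) * dW (bV α) f p := by
    refine Finset.sum_congr rfl fun α _ => ?_
    have := hE2 k i α
    have hsumeq : ∑ β : Fin N, e k β p * dW (bV β) (e i α) p
        = ∑ β : Fin N, e i β p * dW (bV β) (e k α) p := by
      have hsub := Finset.sum_sub_distrib (s := (Finset.univ : Finset (Fin N)))
        (f := fun β => e k β p * dV β (e i α) p) (g := fun β => e i β p * dV β (e k α) p)
      rw [hsub] at this
      have := sub_eq_zero.mp this
      exact this
    rw [hsumeq]
  have h6 : ∑ α : Fin N, ∑ β : Fin N, e k β p * e i α p * dW (bV β) (dW (bV α) f) p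
      = ∑ α : Fin N, ∑ β : Fin N, e i β p * e k α p * dW (bV β) (dW (bV α) f) p := by
    rw [Finset.sum_comm]
    refine Finset.sum_congr rfl fun α _ => Finset.sum_congr rfl fun β _ => ?_
    rw [dW_comm hf p (bV α) (bV β)]
    ring
  rw [h1, h2, h34, h43, h5, h6]
  ring

lemma L_bracket (L : (Tri N → ℝ) → ℝ)
    (hLsum : ∀ (φ : Fin N → Tri N → ℝ), (∀ i, DifferentiableAt ℝ (φ i) p) →
        L (fun q => ∑ i, φ i q) = ∑ i, L (φ i))
    (hLsub : ∀ (φ ψ : Tri N → ℝ), DifferentiableAt ℝ φ p → DifferentiableAt ℝ ψ p →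
        L (fun q => φ q - ψ q) = L φ - L ψ)
    (hLmul : ∀ (φ ψ : Tri N → ℝ), DifferentiableAt ℝ φ p → DifferentiableAt ℝ ψ p →
        L (fun q => φ q * ψ q) = L φ * ψ p + φ p * L ψ)
    (hediff : ∀ i α, DifferentiableAt ℝ (e i α) p)
    {G H : Tri N → ℝ} (hG : ContDiff ℝ (⊤:ℕ∞) G) (hH : ContDiff ℝ (⊤:ℕ∞) H) :
    L (bracketComb e a b G H)
      = ∑ i, (L (dX i G) * Dd e a b i H p + dX i G p * L (Dd e a b i H)
            - (L (dX i H) * Dd e a b i G p + dX i H p * L (Dd e a b i G))) := by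
  rw [bracketComb_eq]
  rw [hLsum (fun i => fun q => dX i G q * Dd e a b i H q - dX i H q * Dd e a b i G q)
      (fun i => ((diffAt_dW hG (bX i) p).mul (diffAt_Dd hediff hH i)).sub
        ((diffAt_dW hH (bX i) p).mul (diffAt_Dd hediff hG i)))]
  refine Finset.sum_congr rfl fun i _ => ?_
  rw [hLsub (fun q => dX i G q * Dd e a b i H q) (fun q => dX i H q * Dd e a b i G q)
      ((diffAt_dW hG (bX i) p).mul (diffAt_Dd hediff hH i))
      ((diffAt_dW hH (bX i) p).mul (diffAt_Dd hediff hG i))]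
  rw [hLmul (dX i G) (Dd e a b i H) (diffAt_dW hG (bX i) p) (diffAt_Dd hediff hH i)]
  rw [hLmul (dX i H) (Dd e a b i G) (diffAt_dW hH (bX i) p) (diffAt_Dd hediff hG i)]

lemma dW_bracket (hediff : ∀ i α, DifferentiableAt ℝ (e i α) p)
    {G H : Tri N → ℝ} (hG : ContDiff ℝ (⊤:ℕ∞) G) (hH : ContDiff ℝ (⊤:ℕ∞) H) (w : Tri N) :
    dW w (bracketComb e a b G H) p
      = ∑ i, (dW w (dX i G) p * Dd e a b i H p + dX i G p * dW w (Dd e a b i H) p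
            - (dW w (dX i H) p * Dd e a b i G p + dX i H p * dW w (Dd e a b i G) p)) :=
  L_bracket (fun φ => dW w φ p)
    (fun φ hφ => dW_sum (fun i _ => hφ i) w)
    (fun φ ψ h1 h2 => dW_sub h1 h2 w)
    (fun φ ψ h1 h2 => dW_mul h1 h2 w) hediff hG hH

lemma Dd_bracket (hediff : ∀ i α, DifferentiableAt ℝ (e i α) p)
    {G H : Tri N → ℝ} (hG : ContDiff ℝ (⊤:ℕ∞) G) (hH : ContDiff ℝ (⊤:ℕ∞) H) (k : Fin N) :
    Dd e a b k (bracketComb e a b G H) p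
      = ∑ i, (Dd e a b k (dX i G) p * Dd e a b i H p + dX i G p * Dd e a b k (Dd e a b i H) p
            - (Dd e a b k (dX i H) p * Dd e a b i G p + dX i H p * Dd e a b k (Dd e a b i G) p)) :=
  L_bracket (fun φ => Dd e a b k φ p)
    (fun φ hφ => Dd_sum (fun i _ => hφ i) k)
    (fun φ ψ h1 h2 => Dd_sub h1 h2 k)
    (fun φ ψ h1 h2 => Dd_mul hediff h1 h2 k) hediff hG hH

end Aux

noncomputable def Wterm {N : ℕ} (e : Fin N → Fin N → Tri N → ℝ) (a b : ℝ)
    (F G H : Tri N → ℝ) (p : Tri N) (k i : Fin N) : ℝ :=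
  dX k F p * (Dd e a b k (dX i G) p * Dd e a b i H p + dX i G p * Dd e a b k (Dd e a b i H) p
      - (Dd e a b k (dX i H) p * Dd e a b i G p + dX i H p * Dd e a b k (Dd e a b i G) p))
  - (dW (bX k) (dX i G) p * Dd e a b i H p + dX i G p * dW (bX k) (Dd e a b i H) p
      - (dW (bX k) (dX i H) p * Dd e a b i G p + dX i H p * dW (bX k) (Dd e a b i G) p))
    * Dd e a b k F p

section Aux2
variable {e : Fin N → Fin N → Tri N → ℝ} {a b : ℝ} {p : Tri N}

lemma bracket_jacobi_term (hediff : ∀ i α, DifferentiableAt ℝ (e i α) p)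
    {F G H : Tri N → ℝ} (hG : ContDiff ℝ (⊤:ℕ∞) G) (hH : ContDiff ℝ (⊤:ℕ∞) H) :
    bracketComb e a b F (bracketComb e a b G H) p = ∑ k, ∑ i, Wterm e a b F G H p k i := by
  rw [congrFun (bracketComb_eq e a b F (bracketComb e a b G H)) p]
  refine Finset.sum_congr rfl fun k _ => ?_
  rw [show dX k (bracketComb e a b G H) p = dW (bX k) (bracketComb e a b G H) p from rfl]
  rw [dW_bracket hediff hG hH (bX k), Dd_bracket hediff hG hH k]
  rw [Finset.mul_sum, Finset.sum_mul, ← Finset.sum_sub_distrib]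
  rfl

lemma Wterm_cyc_anti (hediff : ∀ i α, DifferentiableAt ℝ (e i α) p)
    (hexp : ∀ i α j, dX j (e i α) p = 0)
    (hE1 : ∀ i j α, dU i (e j α) p = dU j (e i α) p)
    (hE2 : ∀ i j β, ∑ α, (e i α p * dV α (e j β) p - e j α p * dV α (e i β) p) = 0)
    {F G H : Tri N → ℝ} (hF : ContDiff ℝ (⊤:ℕ∞) F) (hG : ContDiff ℝ (⊤:ℕ∞) G)
    (hH : ContDiff ℝ (⊤:ℕ∞) H) (k i : Fin N) :
    (Wterm e a b F G H p k i + Wterm e a b G H F p k i + Wterm e a b H F G p k i)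
      + (Wterm e a b F G H p i k + Wterm e a b G H F p i k + Wterm e a b H F G p i k) = 0 := by
  simp only [Wterm]
  simp only [Dd_dX_comm hediff hexp hF, Dd_dX_comm hediff hexp hG, Dd_dX_comm hediff hexp hH]
  simp only [dX_eq]
  rw [dW_comm hF p (bX k) (bX i), dW_comm hG p (bX k) (bX i), dW_comm hH p (bX k) (bX i)]
  rw [Dd_Dd_comm hediff hE1 hE2 hF i k, Dd_Dd_comm hediff hE1 hE2 hG i k,
      Dd_Dd_comm hediff hE1 hE2 hH i k]
  ring

lemma jacobi_backward (hediff : ∀ i α, DifferentiableAt ℝ (e i α) p)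
    (hexp : ∀ i α j, dX j (e i α) p = 0)
    (hE1 : ∀ i j α, dU i (e j α) p = dU j (e i α) p)
    (hE2 : ∀ i j β, ∑ α, (e i α p * dV α (e j β) p - e j α p * dV α (e i β) p) = 0)
    {F G H : Tri N → ℝ} (hF : ContDiff ℝ (⊤:ℕ∞) F) (hG : ContDiff ℝ (⊤:ℕ∞) G)
    (hH : ContDiff ℝ (⊤:ℕ∞) H) :
    bracketComb e a b F (bracketComb e a b G H) p +
      bracketComb e a b G (bracketComb e a b H F) p +
      bracketComb e a b H (bracketComb e a b F G) p = 0 := by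
  rw [bracket_jacobi_term hediff hG hH, bracket_jacobi_term hediff hH hF,
      bracket_jacobi_term hediff hF hG]
  set w : Fin N → Fin N → ℝ := fun k i =>
    Wterm e a b F G H p k i + Wterm e a b G H F p k i + Wterm e a b H F G p k i with hw
  have hcomb : (∑ k, ∑ i, Wterm e a b F G H p k i) + (∑ k, ∑ i, Wterm e a b G H F p k i)
      + (∑ k, ∑ i, Wterm e a b H F G p k i) = ∑ k, ∑ i, w k i := by
    simp only [hw, Finset.sum_add_distrib]
  rw [hcomb]
  have hflip : (∑ k, ∑ i, w k i) = ∑ k, ∑ i, w i k := Finset.sum_comm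
  have hkey : ∀ k i : Fin N, w k i + w i k = 0 := fun k i =>
    Wterm_cyc_anti hediff hexp hE1 hE2 hF hG hH k i
  have h2 : (∑ k, ∑ i, w k i) + (∑ k, ∑ i, w k i) = 0 := by
    nth_rewrite 2 [hflip]
    rw [← Finset.sum_add_distrib]
    refine Finset.sum_eq_zero fun k _ => ?_
    rw [← Finset.sum_add_distrib]
    exact Finset.sum_eq_zero fun i _ => hkey k i
  linarith

end Aux2

def cx {N : ℕ} (i : Fin N) : Tri N → ℝ := fun q => q.1 i
def cv {N : ℕ} (i : Fin N) : Tri N → ℝ := fun q => q.2.2 i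

section Fwd
variable {e : Fin N → Fin N → Tri N → ℝ} {a b : ℝ} {p : Tri N}

lemma contDiff_cx (i : Fin N) : ContDiff ℝ (⊤:ℕ∞) (cx (N := N) i) :=
  ((ContinuousLinearMap.proj i).comp
    (ContinuousLinearMap.fst ℝ (Fin N → ℝ) ((Fin N → ℝ) × (Fin N → ℝ))) : Tri N →L[ℝ] ℝ).contDiff

lemma contDiff_cv (i : Fin N) : ContDiff ℝ (⊤:ℕ∞) (cv (N := N) i) :=
  (((ContinuousLinearMap.proj i).comp (ContinuousLinearMap.snd ℝ (Fin N → ℝ) (Fin N → ℝ))).comp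
    (ContinuousLinearMap.snd ℝ (Fin N → ℝ) ((Fin N → ℝ) × (Fin N → ℝ))) : Tri N →L[ℝ] ℝ).contDiff

lemma dW_cx (j : Fin N) (w p : Tri N) : dW w (cx j) p = w.1 j := dW_coordX j w p
lemma dW_cv (j : Fin N) (w p : Tri N) : dW w (cv j) p = w.2.2 j := dW_coordV j w p

lemma dX_cx (k j : Fin N) (p : Tri N) : dX k (cx j) p = if j = k then 1 else 0 := dW_cx j (bX k) p
lemma dU_cx (k j : Fin N) (p : Tri N) : dU k (cx j) p = 0 := dW_cx j (bU k) p
lemma dV_cx (k j : Fin N) (p : Tri N) : dV k (cx j) p = 0 := dW_cx j (bV k) p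
lemma dX_cv (k j : Fin N) (p : Tri N) : dX k (cv j) p = 0 := dW_cv j (bX k) p
lemma dU_cv (k j : Fin N) (p : Tri N) : dU k (cv j) p = 0 := dW_cv j (bU k) p
lemma dV_cv (k j : Fin N) (p : Tri N) : dV k (cv j) p = if j = k then 1 else 0 := dW_cv j (bV k) p

lemma brk_x_fun (i : Fin N) (φ : Tri N → ℝ) (p : Tri N) :
    bracketComb e a b (cx i) φ p = a * dU i φ p + b * ∑ α, e i α p * dV α φ p := by
  simp only [bracketComb, bracket1, bracket2, dX_cx, dU_cx, dV_cx, ite_mul, one_mul,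
    zero_mul, mul_zero, sub_zero, Finset.sum_ite_eq, Finset.mem_univ, if_true]
  rw [Finset.sum_comm]
  simp [Finset.sum_ite_eq]

lemma brk_x_x (i j : Fin N) : bracketComb e a b (cx i) (cx j) = fun _ => (0:ℝ) := by
  funext q
  rw [brk_x_fun]
  simp [dU_cx, dV_cx]

lemma brk_x_v (j β : Fin N) : bracketComb e a b (cx j) (cv β) = fun q => b * e j β q := by
  funext q
  rw [brk_x_fun]
  simp [dU_cv, dV_cv]

lemma brk_v_x (i β : Fin N) : bracketComb e a b (cv β) (cx i) = fun q => (-b) * e i β q := by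
  funext q
  simp only [bracketComb, bracket1, bracket2, dX_cx, dU_cx, dV_cx, dX_cv, dU_cv, dV_cv,
    ite_mul, one_mul, zero_mul, mul_zero, sub_zero, zero_sub, mul_ite, mul_one]
  simp [Finset.sum_ite_eq]

lemma brk_zero (φ : Tri N → ℝ) (p : Tri N) :
    bracketComb e a b φ (fun _ => (0:ℝ)) p = 0 := by
  have h1 : ∀ w : Tri N, dW w (fun _ : Tri N => (0:ℝ)) p = 0 := fun w => dW_zero w p
  simp only [bracketComb, bracket1, bracket2]
  rw [Finset.sum_eq_zero fun i _ => by
    rw [show dU i (fun _ : Tri N => (0:ℝ)) p = 0 from h1 (bU i),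
        show dX i (fun _ : Tri N => (0:ℝ)) p = 0 from h1 (bX i)]; ring]
  rw [Finset.sum_eq_zero fun i _ => Finset.sum_eq_zero fun α _ => by
    rw [show dV α (fun _ : Tri N => (0:ℝ)) p = 0 from h1 (bV α),
        show dX i (fun _ : Tri N => (0:ℝ)) p = 0 from h1 (bX i)]; ring]
  ring

lemma jacobi_forward_point (hediff : ∀ i α, DifferentiableAt ℝ (e i α) p) (i j β : Fin N)
    (hjac : bracketComb e a b (cx i) (bracketComb e a b (cx j) (cv β)) p
          + bracketComb e a b (cx j) (bracketComb e a b (cv β) (cx i)) p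
          + bracketComb e a b (cv β) (bracketComb e a b (cx i) (cx j)) p = 0) :
    a*b*(dU i (e j β) p - dU j (e i β) p)
      + b*b*(∑ α, (e i α p * dV α (e j β) p - e j α p * dV α (e i β) p)) = 0 := by
  rw [brk_x_v j β, brk_v_x i β, brk_x_x i j] at hjac
  rw [brk_x_fun i (fun q => b * e j β q) p, brk_x_fun j (fun q => (-b) * e i β q) p,
      brk_zero] at hjac
  have h1 : dU i (fun q => b * e j β q) p = b * dU i (e j β) p :=
    dW_const_mul (hediff j β) b (bU i)
  have h2 : dU j (fun q => (-b) * e i β q) p = (-b) * dU j (e i β) p :=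
    dW_const_mul (hediff i β) (-b) (bU j)
  have h3 : ∀ α : Fin N, dV α (fun q => b * e j β q) p = b * dV α (e j β) p :=
    fun α => dW_const_mul (hediff j β) b (bV α)
  have h4 : ∀ α : Fin N, dV α (fun q => (-b) * e i β q) p = (-b) * dV α (e i β) p :=
    fun α => dW_const_mul (hediff i β) (-b) (bV α)
  simp only [h1, h2, h3, h4] at hjac
  have hs : b*b*(∑ α, (e i α p * dV α (e j β) p - e j α p * dV α (e i β) p))
      = b * ∑ α, e i α p * (b * dV α (e j β) p) + b * ∑ α, e j α p * ((-b) * dV α (e i β) p) := by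
    rw [Finset.mul_sum, Finset.mul_sum, Finset.mul_sum, ← Finset.sum_add_distrib]
    exact Finset.sum_congr rfl fun α _ => by ring
  rw [hs]
  linear_combination hjac

end Fwd


/-- For the weakly canonical brackets `B₁`, `B₂` built from a smooth matrix
`e_{iα}` depending only on `(u,v)`, every linear combination `a•B₁ + b•B₂` satisfies the
Jacobi identity on `U` if and only if `e` satisfies
(E1) `∂e_{jα}/∂uᵢ = ∂e_{iα}/∂uⱼ` and
(E2) `Σ_α (e_{iα} ∂e_{jβ}/∂v_α − e_{jα} ∂e_{iβ}/∂v_α) = 0` on `U`. -/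
theorem weakly_canonical_jacobi_iff_econd
    (N : ℕ) (hN : 1 ≤ N)
    (U : Set (Tri N)) (hU : IsOpen U)
    (e : Fin N → Fin N → Tri N → ℝ)
    (hesmooth : ∀ i α, ContDiffOn ℝ (⊤ : ℕ∞) (e i α) U)
    (hex : ∀ i α j, ∀ p ∈ U, dX j (e i α) p = 0) :
    (∀ a b : ℝ, ∀ F G H : Tri N → ℝ,
        ContDiff ℝ (⊤ : ℕ∞) F → ContDiff ℝ (⊤ : ℕ∞) G → ContDiff ℝ (⊤ : ℕ∞) H →
        ∀ p ∈ U,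
          bracketComb e a b F (bracketComb e a b G H) p +
          bracketComb e a b G (bracketComb e a b H F) p +
          bracketComb e a b H (bracketComb e a b F G) p = 0)
    ↔
    ((∀ i j α, ∀ p ∈ U, dU i (e j α) p = dU j (e i α) p) ∧
     (∀ i j β, ∀ p ∈ U,
        ∑ α, (e i α p * dV α (e j β) p - e j α p * dV α (e i β) p) = 0)) := by
  have hed : ∀ p ∈ U, ∀ i α, DifferentiableAt ℝ (e i α) p := fun p hp i α =>
    ((hesmooth i α).contDiffAt (hU.mem_nhds hp)).differentiableAt (by simp)
  constructor
  · intro hjac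
    constructor
    · intro i j α p hp
      have h1 := jacobi_forward_point (a := 1) (b := 1) (hed p hp) i j α
        (hjac 1 1 (cx i) (cx j) (cv α) (contDiff_cx i) (contDiff_cx j) (contDiff_cv α) p hp)
      have h2 := jacobi_forward_point (a := -1) (b := 1) (hed p hp) i j α
        (hjac (-1) 1 (cx i) (cx j) (cv α) (contDiff_cx i) (contDiff_cx j) (contDiff_cv α) p hp)
      have h1' : (dU i (e j α) p - dU j (e i α) p)
          + (∑ α', (e i α' p * dV α' (e j α) p - e j α' p * dV α' (e i α) p)) = 0 := by
        linear_combination h1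
      have h2' : -(dU i (e j α) p - dU j (e i α) p)
          + (∑ α', (e i α' p * dV α' (e j α) p - e j α' p * dV α' (e i α) p)) = 0 := by
        linear_combination h2
      linarith
    · intro i j β p hp
      have h1 := jacobi_forward_point (a := 1) (b := 1) (hed p hp) i j β
        (hjac 1 1 (cx i) (cx j) (cv β) (contDiff_cx i) (contDiff_cx j) (contDiff_cv β) p hp)
      have h2 := jacobi_forward_point (a := -1) (b := 1) (hed p hp) i j β
        (hjac (-1) 1 (cx i) (cx j) (cv β) (contDiff_cx i) (contDiff_cx j) (contDiff_cv β) p hp)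
      have h1' : (dU i (e j β) p - dU j (e i β) p)
          + (∑ α, (e i α p * dV α (e j β) p - e j α p * dV α (e i β) p)) = 0 := by
        linear_combination h1
      have h2' : -(dU i (e j β) p - dU j (e i β) p)
          + (∑ α, (e i α p * dV α (e j β) p - e j α p * dV α (e i β) p)) = 0 := by
        linear_combination h2
      linarith
  · rintro ⟨hE1, hE2⟩ a b F G H hF hG hH p hp
    exact jacobi_backward (hed p hp) (fun i α j => hex i α j p hp)
      (fun i j α => hE1 i j α p hp) (fun i j β => hE2 i j β p hp) hF hG hH
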